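/- Regret-to-coverage conversion: Let T ∈ ℕ, α ∈ (0,0.5), and let ℓ_t(π) = m_t(π) + 1{m_t(π)=0} g(α) + 1{m_t(π)=1} h(α) + a_t(π) with g(α) = α + α(1−α), h(α) = −α(1−α), and arbitrary inefficiency terms a_t : Π → ℝ. Suppose 0 ∈ Π and the learner plays π_1,…,π_T with regret Reg(T) = Σ_t ℓ_t(π_t) − min_{π∈Π} Σ_t ℓ_t(π), and suppose m_t(0)=0 for all t. Then (1/T)Σ_t m_t(π_t) − α ≤ (1/T)Reg(T) + C₁ + (α/T)·Σ_{t: m_t(π_t)=1} Δ, where C₁ = (T·a_t(0) − Σ_t a_t(π_t))/T (with a_t(0) the inefficiency at π=0) and Δ = (1−α)/α − (Σ_t 1{m_t(π_t)=0})/(Σ_t 1{m_t(π_t)=1}) whenever Σ_t 1{m_t(π_t)=1} > 0. -/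

import Mathlib

theorem regret_to_coverage (T : ℕ) (hT : 0 < T)
    (S : Finset ℝ) (h0 : (0:ℝ) ∈ S)
    (α : ℝ) (hα0 : 0 < α) (hα1 : α < 0.5)
    (m : ℕ → ℝ → ℝ) (hm01 : ∀ t π, m t π = 0 ∨ m t π = 1)
    (hm0 : ∀ t, m t 0 = 0)
    (a : ℕ → ℝ → ℝ) (a0 : ℝ) (ha0 : ∀ t, a t 0 = a0)
    (ℓ : ℕ → ℝ → ℝ)
    (hℓ : ∀ t π, ℓ t π = m t π
        + (if m t π = 0 then α + α * (1 - α) else -(α * (1 - α))) + a t π)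
    (play : ℕ → ℝ) (hplay : ∀ t, play t ∈ S)
    (N1 : ℝ)
    (hN1 : N1 = ∑ t ∈ Finset.range T, (if m t (play t) = 1 then (1:ℝ) else 0))
    (hN1pos : 0 < N1)
    (Reg C1 Δ : ℝ)
    (hReg : Reg = ∑ t ∈ Finset.range T, ℓ t (play t)
        - S.inf' ⟨0, h0⟩ (fun π => ∑ t ∈ Finset.range T, ℓ t π))
    (hC1 : C1 = ((T : ℝ) * a0 - ∑ t ∈ Finset.range T, a t (play t)) / T)
    (hΔ : Δ = (1 - α) / α
        - (∑ t ∈ Finset.range T, (if m t (play t) = 0 then (1:ℝ) else 0)) / N1) :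
    (1 / (T:ℝ)) * (∑ t ∈ Finset.range T, m t (play t)) - α
      ≤ (1 / (T:ℝ)) * Reg + C1 + (α / (T:ℝ)) * (N1 * Δ) := by
  have hT' : (0:ℝ) < T := by exact_mod_cast hT
  set N0 : ℝ := ∑ t ∈ Finset.range T, (if m t (play t) = 0 then (1:ℝ) else 0) with hN0
  set A : ℝ := ∑ t ∈ Finset.range T, a t (play t) with hA
  -- sum of m equals N1
  have hsum_m : ∑ t ∈ Finset.range T, m t (play t) = N1 := by
    rw [hN1]
    refine Finset.sum_congr rfl (fun t _ => ?_)
    rcases hm01 t (play t) with h | h <;> simp [h]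
  -- N0 + N1 = T
  have hN0N1 : N0 + N1 = T := by
    rw [hN0, hN1, ← Finset.sum_add_distrib]
    have : ∀ t ∈ Finset.range T,
        ((if m t (play t) = 0 then (1:ℝ) else 0) + (if m t (play t) = 1 then (1:ℝ) else 0)) = 1 := by
      intro t _
      rcases hm01 t (play t) with h | h <;> norm_num [h]
    rw [Finset.sum_congr rfl this]
    simp
  -- sum of losses at played points
  have hL : ∑ t ∈ Finset.range T, ℓ t (play t)
      = N1 + ((α + α * (1 - α)) * N0 + (-(α * (1 - α))) * N1) + A := by
    have e : ∀ t ∈ Finset.range T, ℓ t (play t)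
        = m t (play t)
          + ((α + α * (1 - α)) * (if m t (play t) = 0 then (1:ℝ) else 0)
            + (-(α * (1 - α))) * (if m t (play t) = 1 then (1:ℝ) else 0))
          + a t (play t) := by
      intro t _
      rw [hℓ]
      rcases hm01 t (play t) with h | h <;> norm_num [h]
    rw [Finset.sum_congr rfl e, Finset.sum_add_distrib, Finset.sum_add_distrib,
      Finset.sum_add_distrib, ← Finset.mul_sum, ← Finset.mul_sum, hsum_m, ← hN0, ← hN1, ← hA]
  -- sum of losses at 0
  have hL0 : ∑ t ∈ Finset.range T, ℓ t 0 = (T:ℝ) * (α + α * (1 - α)) + (T:ℝ) * a0 := by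
    have e : ∀ t ∈ Finset.range T, ℓ t 0 = (α + α * (1 - α)) + a0 := by
      intro t _
      rw [hℓ, hm0, ha0]
      norm_num
    rw [Finset.sum_congr rfl e]
    simp [Finset.sum_const, Finset.card_range]
    ring
  -- infimum bound
  have hinf : S.inf' ⟨0, h0⟩ (fun π => ∑ t ∈ Finset.range T, ℓ t π)
      ≤ ∑ t ∈ Finset.range T, ℓ t 0 := Finset.inf'_le _ h0
  have hRegLB : N1 * (1 - α - 2 * α * (1 - α)) + A - (T:ℝ) * a0 ≤ Reg := by
    rw [hReg, hL]
    rw [hL0] at hinf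
    have hc : (α + α * (1 - α)) * N0 + (α + α * (1 - α)) * N1
        = (T:ℝ) * (α + α * (1 - α)) := by
      rw [← mul_add, hN0N1, mul_comm]
    nlinarith [hN0N1, hc]
  have hcoef : 0 ≤ 1 - α - 2 * α * (1 - α) := by nlinarith
  have hfin : N1 - α * T ≤ Reg + ((T:ℝ) * a0 - A) + (N1 * (1 - α) - α * N0) := by
    nlinarith [mul_nonneg (le_of_lt hN1pos) hcoef]
  have hNΔ : (α / (T:ℝ)) * (N1 * Δ) = (N1 * (1 - α) - α * N0) / T := by
    rw [hΔ]
    field_simp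
  rw [hsum_m, hC1, hNΔ]
  have e1 : (1 / (T:ℝ)) * N1 - α = (N1 - α * T) / T := by field_simp
  have e2 : (1 / (T:ℝ)) * Reg + ((T:ℝ) * a0 - A) / T + (N1 * (1 - α) - α * N0) / T
      = (Reg + ((T:ℝ) * a0 - A) + (N1 * (1 - α) - α * N0)) / T := by
    field_simp
  rw [e1, e2]
  exact (div_le_div_iff_of_pos_right hT').mpr hfin
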